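/- arXiv:1806.11542 — 2 statements merged into one kernel-verified Lean document; each statement's English description precedes it below -/
import Mathlib

section
/- Let t > 1 and let β_0 ≥ β_1 ≥ ... ≥ β_{n'} ≥ 0 be a nonincreasing sequence of reals. Define U' = β_0 + (t-1)·Σ_{i=0}^{n'-1} β_i t^i and L' = β_0 + (t-1)·Σ_{i=0}^{n'-1} β_{min(i+2, n')} t^i. Then U' ≤ t² · L'. -/
/-- For `t > 1` and a nonincreasing nonnegative sequence `β_0 ≥ ... ≥ β_{n'}`, the upper
estimate `U' = β_0 + (t-1) Σ β_i t^i` and lower estimate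
`L' = β_0 + (t-1) Σ β_{min(i+2,n')} t^i` satisfy `U' ≤ t² L'`. -/
theorem stmt4 (t : ℝ) (ht : 1 < t) (n' : ℕ) (hn' : 1 ≤ n') (β : ℕ → ℝ)
    (hmono : ∀ i j, i ≤ j → j ≤ n' → β j ≤ β i) (hnonneg : ∀ i, i ≤ n' → 0 ≤ β i) :
    β 0 + (t - 1) * ∑ i ∈ Finset.range n', β i * t ^ i
      ≤ t ^ 2 * (β 0 + (t - 1) * ∑ i ∈ Finset.range n', β (min (i + 2) n') * t ^ i) := by
  have ht0 : (0:ℝ) < t := by linarith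
  match n', hn' with
  | 1, _ =>
    simp only [Finset.sum_range_one, pow_zero, mul_one]
    norm_num
    nlinarith [hnonneg 0 (by norm_num), hnonneg 1 le_rfl,
      mul_nonneg (mul_nonneg (sq_nonneg t) (by linarith : (0:ℝ) ≤ t - 1)) (hnonneg 1 le_rfl),
      mul_nonneg (mul_nonneg ht0.le (by linarith : (0:ℝ) ≤ t - 1)) (hnonneg 0 (by norm_num))]
  | (m+2), _ =>
    set S := ∑ i ∈ Finset.range (m+2), β (min (i + 2) (m+2)) * t ^ i with hS
    have hL : ∑ i ∈ Finset.range (m+2), β i * t ^ i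
        = (∑ i ∈ Finset.range m, β (i+2) * t ^ (i+2)) + β 1 * t + β 0 := by
      rw [Finset.sum_range_succ', Finset.sum_range_succ']
      ring
    have hT : (∑ i ∈ Finset.range m, β (i+2) * t ^ (i+2)) ≤ t ^ 2 * S := by
      have h1 : (∑ i ∈ Finset.range m, β (i+2) * t ^ (i+2))
          = ∑ i ∈ Finset.range m, β (min (i + 2) (m+2)) * t ^ (i+2) := by
        apply Finset.sum_congr rfl
        intro i hi
        have : i + 2 ≤ m + 2 := by
          have := Finset.mem_range.mp hi; omega
        rw [min_eq_left this]
      rw [h1]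
      have h2 : (∑ i ∈ Finset.range m, β (min (i + 2) (m+2)) * t ^ (i+2))
          ≤ ∑ i ∈ Finset.range (m+2), β (min (i + 2) (m+2)) * t ^ (i+2) := by
        apply Finset.sum_le_sum_of_subset_of_nonneg
        · exact Finset.range_subset_range.mpr (by omega)
        · intro i _ _
          exact mul_nonneg (hnonneg _ (by omega)) (pow_nonneg ht0.le _)
      refine h2.trans_eq ?_
      rw [hS, Finset.mul_sum]
      apply Finset.sum_congr rfl
      intro i _
      ring
    rw [hL]
    have hb01 : β 1 ≤ β 0 := hmono 0 1 (by norm_num) (by omega)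
    have hb0 : 0 ≤ β 0 := hnonneg 0 (by omega)
    nlinarith [mul_le_mul_of_nonneg_left hT (by linarith : (0:ℝ) ≤ t - 1),
      mul_nonneg (mul_nonneg (by linarith : (0:ℝ) ≤ t - 1) ht0.le) (by linarith : 0 ≤ β 0 - β 1)]
end

section
/- Any family H of functions from {0,1}^n to {0,1}^m that is uniform and pairwise independent (with respect to the uniform distribution on H) has size |H| ≥ 2^{m+n} − 2^n + 1. -/
open Finset

noncomputable section Aux11

/-- character `(-1)^{⟨u,w⟩}` -/
def chi11 {m : ℕ} (u w : Fin m → Bool) : ℝ :=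
  ∏ i, (if u i && w i then (-1 : ℝ) else 1)

lemma chi11_mul {m : ℕ} (u v w : Fin m → Bool) :
    chi11 u w * chi11 v w = chi11 (fun i => xor (u i) (v i)) w := by
  unfold chi11
  rw [← Finset.prod_mul_distrib]
  refine Finset.prod_congr rfl fun i _ => ?_
  cases hu : u i <;> cases hv : v i <;> cases hw : w i <;> simp [hu, hv, hw]

lemma chi11_sq {m : ℕ} (u w : Fin m → Bool) : chi11 u w * chi11 u w = 1 := by
  unfold chi11
  rw [← Finset.prod_mul_distrib]
  rw [Finset.prod_eq_one]
  intro i _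
  split <;> norm_num

lemma sum_chi11 {m : ℕ} (u : Fin m → Bool) (hu : u ≠ fun _ => false) :
    ∑ w : Fin m → Bool, chi11 u w = 0 := by
  obtain ⟨i, hi⟩ : ∃ i, u i = true := by
    by_contra hc
    push_neg at hc
    exact hu (funext fun i => by simpa using hc i)
  have key : ∀ w : Fin m → Bool,
      chi11 u (Function.update w i (!(w i))) = - chi11 u w := by
    intro w
    unfold chi11
    rw [← Finset.mul_prod_erase _ _ (Finset.mem_univ i),
        ← Finset.mul_prod_erase _ (fun j => if u j && w j then (-1:ℝ) else 1)
          (Finset.mem_univ i)]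
    have h2 : ∀ j ∈ Finset.univ.erase i,
        (if u j && Function.update w i (!(w i)) j then (-1:ℝ) else 1)
          = (if u j && w j then (-1:ℝ) else 1) := by
      intro j hj
      rw [Function.update_of_ne (Finset.mem_erase.1 hj).1]
    rw [Finset.prod_congr rfl h2, Function.update_self, hi]
    cases hw : w i <;> simp
  refine Finset.sum_ninvolution (fun w => Function.update w i (!(w i))) ?_ ?_
    (fun w => Finset.mem_univ _) ?_
  · intro w; rw [key]; ring
  · intro w _ hcon
    have := congrFun hcon i
    simp at this
  · intro w
    funext j
    by_cases hj : j = i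
    · subst hj; simp
    · simp [Function.update_of_ne hj]

end Aux11

open Classical in
/-- Any uniform, pairwise independent family `H` of hash functions
`{0,1}^n → {0,1}^m` has size at least `2^{m+n} - 2^n + 1`. -/
theorem stmt11 (n m : ℕ) (H : Finset ((Fin n → Bool) → (Fin m → Bool))) (hne : H.Nonempty)
    (hunif : ∀ (x : Fin n → Bool) (u : Fin m → Bool),
      (H.filter (fun h => h x = u)).card * 2 ^ m = H.card)
    (hpair : ∀ (x y : Fin n → Bool), x ≠ y → ∀ (u v : Fin m → Bool),
      (H.filter (fun h => h x = u ∧ h y = v)).card * H.card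
        = (H.filter (fun h => h x = u)).card * (H.filter (fun h => h y = v)).card) :
    2 ^ (m + n) - 2 ^ n + 1 ≤ H.card := by
  
  classical
  have hN0 : 0 < H.card := Finset.card_pos.2 hne
  have hNR : (H.card : ℝ) ≠ 0 := Nat.cast_ne_zero.2 hN0.ne'
  -- single fiber decomposition
  have hsingle : ∀ (x : Fin n → Bool) (F : (Fin m → Bool) → ℝ),
      ∑ h ∈ H, F (h x)
        = ∑ w : Fin m → Bool, ((H.filter (fun h => h x = w)).card : ℝ) * F w := by
    intro x F
    have hf := Finset.sum_fiberwise_of_maps_to' (s := H)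
      (t := (Finset.univ : Finset (Fin m → Bool))) (g := fun h => h x)
      (fun h _ => Finset.mem_univ _) F
    rw [← hf]
    refine Finset.sum_congr rfl fun w _ => ?_
    rw [Finset.sum_const, nsmul_eq_mul]
  -- weighted character sums vanish
  have hkey : ∀ (x : Fin n → Bool) (u : Fin m → Bool), u ≠ (fun _ => false) →
      ∑ w : Fin m → Bool, ((H.filter (fun h => h x = w)).card : ℝ) * chi11 u w = 0 := by
    intro x u hu
    have h2 : (∑ w : Fin m → Bool,
        ((H.filter (fun h => h x = w)).card : ℝ) * chi11 u w) * 2 ^ m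
        = (H.card : ℝ) * ∑ w : Fin m → Bool, chi11 u w := by
      rw [Finset.sum_mul, Finset.mul_sum]
      refine Finset.sum_congr rfl fun w _ => ?_
      have hc : ((H.filter (fun h => h x = w)).card : ℝ) * 2 ^ m = (H.card : ℝ) := by
        exact_mod_cast congrArg (Nat.cast : ℕ → ℝ) (hunif x w)
      linear_combination chi11 u w * hc
    rw [sum_chi11 u hu, mul_zero] at h2
    have h2m : ((2 : ℝ) ^ m) ≠ 0 := by positivity
    exact (mul_eq_zero.1 h2).resolve_right h2m
  have hH0 : ∀ (x : Fin n → Bool) (u : Fin m → Bool), u ≠ (fun _ => false) →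
      ∑ h ∈ H, chi11 u (h x) = 0 := by
    intro x u hu
    rw [hsingle x (chi11 u)]
    exact hkey x u hu
  -- cross terms vanish for distinct points
  have hcross : ∀ (x y : Fin n → Bool), x ≠ y → ∀ (u v : Fin m → Bool),
      u ≠ (fun _ => false) →
      ∑ h ∈ H, chi11 u (h x) * chi11 v (h y) = 0 := by
    intro x y hxy u v hu
    have hfib : ∑ h ∈ H, chi11 u (h x) * chi11 v (h y)
        = ∑ p : (Fin m → Bool) × (Fin m → Bool),
            ((H.filter (fun h => h x = p.1 ∧ h y = p.2)).card : ℝ)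
              * (chi11 u p.1 * chi11 v p.2) := by
      have hf := Finset.sum_fiberwise_of_maps_to' (s := H)
        (t := (Finset.univ : Finset ((Fin m → Bool) × (Fin m → Bool))))
        (g := fun h => (h x, h y)) (fun h _ => Finset.mem_univ _)
        (fun p => chi11 u p.1 * chi11 v p.2)
      rw [← hf]
      refine Finset.sum_congr rfl fun p _ => ?_
      rw [Finset.sum_const, nsmul_eq_mul]
      have hfe : (H.filter (fun h => (h x, h y) = p))
          = (H.filter (fun h => h x = p.1 ∧ h y = p.2)) := by
        ext h
        simp [Prod.ext_iff]
      rw [hfe]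
    have hmulN : (∑ h ∈ H, chi11 u (h x) * chi11 v (h y)) * (H.card : ℝ)
        = (∑ w : Fin m → Bool, ((H.filter (fun h => h x = w)).card : ℝ) * chi11 u w)
          * (∑ z : Fin m → Bool, ((H.filter (fun h => h y = z)).card : ℝ) * chi11 v z) := by
      rw [hfib, Finset.sum_mul, Finset.sum_mul_sum, Fintype.sum_prod_type]
      refine Finset.sum_congr rfl fun w _ => Finset.sum_congr rfl fun z _ => ?_
      have hc : ((H.filter (fun h => h x = w ∧ h y = z)).card : ℝ) * (H.card : ℝ)
          = ((H.filter (fun h => h x = w)).card : ℝ)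
            * ((H.filter (fun h => h y = z)).card : ℝ) := by
        exact_mod_cast congrArg (Nat.cast : ℕ → ℝ) (hpair x y hxy w z)
      linear_combination chi11 u w * chi11 v z * hc
    rw [hkey x u hu, zero_mul] at hmulN
    exact (mul_eq_zero.1 hmulN).resolve_right hNR
  -- the orthogonal family
  set N := H.card with hNdef
  let V : Option ((Fin n → Bool) × {u : Fin m → Bool // u ≠ fun _ => false})
      → EuclideanSpace ℝ {h // h ∈ H} := fun i =>
    match i with
    | none => WithLp.toLp 2 (fun _ => 1)
    | some (x, u) => WithLp.toLp 2 (fun h => chi11 u.1 (h.1 x))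
  have hVsum : ∀ (i j : Option ((Fin n → Bool) × {u : Fin m → Bool // u ≠ fun _ => false})), (inner ℝ (V i) (V j) : ℝ)
      = ∑ h ∈ H, (fun h' => if hh : h' ∈ H then V i ⟨h', hh⟩ * V j ⟨h', hh⟩ else 0) h := by
    intro i j
    rw [PiLp.inner_apply]
    rw [← Finset.sum_coe_sort H (fun h' => if hh : h' ∈ H then V i ⟨h', hh⟩ * V j ⟨h', hh⟩ else 0)]
    refine Finset.sum_congr rfl fun h _ => ?_
    simp [RCLike.inner_apply, mul_comm]
  have hinner : ∀ (i j : Option ((Fin n → Bool) × {u : Fin m → Bool // u ≠ fun _ => false})), (inner ℝ (V i) (V j) : ℝ) = if i = j then (N : ℝ) else 0 := by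
    intro i j
    rw [hVsum]
    by_cases hij : i = j
    · subst hij
      simp only [if_true]
      have : ∀ h ∈ H, (fun h' => if hh : h' ∈ H then V i ⟨h', hh⟩ * V i ⟨h', hh⟩ else 0) h
          = 1 := by
        intro h hh
        simp only [dif_pos hh]
        match i with
        | none => simp [V]
        | some (x, u) => exact chi11_sq u.1 (h x)
      rw [Finset.sum_congr rfl this, Finset.sum_const, nsmul_eq_mul, mul_one]
    · rw [if_neg hij]
      match i, j with
      | none, none => exact absurd rfl hij
      | none, some (y, v) =>
        have : ∀ h ∈ H, (fun h' => if hh : h' ∈ H then V none ⟨h', hh⟩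
            * V (some (y, v)) ⟨h', hh⟩ else 0) h = chi11 v.1 (h y) := by
          intro h hh; simp only [dif_pos hh]; simp [V]
        rw [Finset.sum_congr rfl this]
        exact hH0 y v.1 v.2
      | some (x, u), none =>
        have : ∀ h ∈ H, (fun h' => if hh : h' ∈ H then V (some (x, u)) ⟨h', hh⟩
            * V none ⟨h', hh⟩ else 0) h = chi11 u.1 (h x) := by
          intro h hh; simp only [dif_pos hh]; simp [V]
        rw [Finset.sum_congr rfl this]
        exact hH0 x u.1 u.2
      | some (x, u), some (y, v) =>
        have hstep : ∀ h ∈ H, (fun h' => if hh : h' ∈ H then V (some (x, u)) ⟨h', hh⟩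
            * V (some (y, v)) ⟨h', hh⟩ else 0) h = chi11 u.1 (h x) * chi11 v.1 (h y) := by
          intro h hh; simp only [dif_pos hh]; rfl
        rw [Finset.sum_congr rfl hstep]
        by_cases hxy : x = y
        · subst hxy
          have huv : u.1 ≠ v.1 := by
            intro hc
            exact hij (by simp [Subtype.ext hc])
          obtain ⟨k, hk⟩ : ∃ k, u.1 k ≠ v.1 k := by
            by_contra hc; push_neg at hc; exact huv (funext hc)
          have hs : (fun k => xor (u.1 k) (v.1 k)) ≠ (fun _ => false) := by
            intro hc
            have h' : (xor (u.1 k) (v.1 k)) = false := congrFun hc k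
            cases hku : u.1 k <;> cases hkv : v.1 k
            · exact hk (hku.trans hkv.symm)
            · rw [hku, hkv] at h'; simp at h'
            · rw [hku, hkv] at h'; simp at h'
            · exact hk (hku.trans hkv.symm)
          have : ∀ h ∈ H, chi11 u.1 (h x) * chi11 v.1 (h x)
              = chi11 (fun k => xor (u.1 k) (v.1 k)) (h x) := fun h _ => chi11_mul _ _ _
          rw [Finset.sum_congr rfl this]
          exact hH0 x _ hs
        · exact hcross x y hxy u.1 v.1 u.2
  -- normalize and get an orthonormal family
  have hNpos : (0 : ℝ) < (N : ℝ) := by exact_mod_cast hN0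
  let W : Option ((Fin n → Bool) × {u : Fin m → Bool // u ≠ fun _ => false})
      → EuclideanSpace ℝ {h // h ∈ H} := fun i => (Real.sqrt (N : ℝ))⁻¹ • V i
  have hW : Orthonormal ℝ W := by
    rw [orthonormal_iff_ite]
    intro i j
    have : (inner ℝ (W i) (W j) : ℝ)
        = (Real.sqrt (N : ℝ))⁻¹ * ((Real.sqrt (N : ℝ))⁻¹ * (inner ℝ (V i) (V j) : ℝ)) := by
      rw [show W i = (Real.sqrt (N : ℝ))⁻¹ • V i from rfl,
          show W j = (Real.sqrt (N : ℝ))⁻¹ • V j from rfl,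
          real_inner_smul_left, real_inner_smul_right]
    rw [this, hinner i j]
    by_cases hij : i = j
    · rw [if_pos hij, if_pos hij, ← mul_assoc, ← mul_inv,
        Real.mul_self_sqrt hNpos.le, inv_mul_cancel₀ hNpos.ne']
    · rw [if_neg hij, if_neg hij, mul_zero, mul_zero]
  have hli : LinearIndependent ℝ W := hW.linearIndependent
  have hcard : Fintype.card
      (Option ((Fin n → Bool) × {u : Fin m → Bool // u ≠ fun _ => false})) ≤ N := by
    have := hli.fintype_card_le_finrank
    rwa [finrank_euclideanSpace, Fintype.card_coe] at this
  -- compute the cardinality of the index type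
  have hcardK : Fintype.card {u : Fin m → Bool // u ≠ fun _ => false} = 2 ^ m - 1 := by
    have h1 : Fintype.card {u : Fin m → Bool // u ≠ fun _ => false}
        = Fintype.card (Fin m → Bool)
          - Fintype.card {u : Fin m → Bool // u = fun _ => false} := by
      simpa using (Fintype.card_subtype_compl (fun u : Fin m → Bool => u = fun _ => false))
    rw [h1, Fintype.card_subtype_eq]
    simp
  have hcardI : Fintype.card
      (Option ((Fin n → Bool) × {u : Fin m → Bool // u ≠ fun _ => false}))
      = 2 ^ n * (2 ^ m - 1) + 1 := by
    rw [Fintype.card_option, Fintype.card_prod, hcardK]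
    simp
  rw [hcardI] at hcard
  have h2m : 1 ≤ 2 ^ m := Nat.one_le_two_pow
  have hpow : 2 ^ (m + n) = 2 ^ n * 2 ^ m := by rw [pow_add, mul_comm]
  have hms : 2 ^ n * (2 ^ m - 1) = 2 ^ n * 2 ^ m - 2 ^ n := by
    rw [Nat.mul_sub, mul_one]
  omega
end
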